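/- Let d ≥ 0, e = 2^d, and ν a suitable tuple. If n_{e−1} = 1 then M_d^ν maps the subspace of even vectors {v : v_e = 0} bijectively onto the subspace {v : v_1 = 0}; if n_{e−1} = 0 then M_d^ν maps the subspace of even vectors bijectively onto itself. -/

import Mathlib

open Matrix

/-- The Pascal-triangle matrix over `F₂`: `M 0 = (1)`,
`M (d+1) = [[M d, M d],[0, M d]]`. -/
def pascalM : (d : ℕ) → Matrix (Fin (2^d)) (Fin (2^d)) (ZMod 2)
  | 0 => fun _ _ => 1
  | d+1 =>
    Matrix.reindex (finSumFinEquiv.trans (finCongr (by rw [pow_succ]; ring)))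
      (finSumFinEquiv.trans (finCongr (by rw [pow_succ]; ring)))
      (Matrix.fromBlocks (pascalM d) (pascalM d) 0 (pascalM d))

/-- The `n`-th vector of `F₂^e` in lexicographic order (as binary words,
index `0` being the most significant bit). -/
def vecOf (e n : ℕ) : Fin e → ZMod 2 := fun i => ((n / 2^(e - 1 - i.val)) % 2 : ℕ)

/-- Rotation moving the last entry of a vector to the front. -/
def rot {e : ℕ} (v : Fin e → ZMod 2) : Fin e → ZMod 2 :=
  fun i => v ⟨(i.val + (e - 1)) % e, Nat.mod_lt _ i.pos⟩

/-- `Suitable e ν` : the tuple `(ν 0, …, ν (e-1))` (representing `n_1,…,n_e`)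
satisfies `n_e = 0` and `n_{i+1} ≤ n_i ≤ n_{i+1}+1`. -/
def Suitable (e : ℕ) (ν : ℕ → ℕ) : Prop :=
  ν (e - 1) = 0 ∧ ∀ j, j + 2 ≤ e → ν (j+1) ≤ ν j ∧ ν j ≤ ν (j+1) + 1

/-- The matrix `M_d^ν`, whose `j`-th column is the `j`-th column of `M_d`
rotated `ν j` times. -/
def pascalMnu (d : ℕ) (ν : ℕ → ℕ) : Matrix (Fin (2^d)) (Fin (2^d)) (ZMod 2) :=
  fun i j => (rot^[ν j.val] (fun r => pascalM d r j)) i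

/-- The `d`-th Levin block `λ_d = (M_d w_0)(M_d w_1)⋯(M_d w_{2^e-1})`
as an `ℕ`-indexed word (`e = 2^d`). -/
def levinBlock (d : ℕ) (p : ℕ) : ZMod 2 :=
  (pascalM d).mulVec (vecOf (2^d) (p / 2^d)) ⟨p % 2^d, Nat.mod_lt _ (Nat.two_pow_pos d)⟩

/-- Length of the `d`-th Levin block: `2^d · 2^(2^d)`. -/
def levinLen (d : ℕ) : ℕ := 2^d * 2^(2^d)

/-- The binary expansion of Levin's number `λ = λ₀λ₁λ₂⋯`. -/
def levinWord (p : ℕ) : ZMod 2 := go 0 p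
where
  go (d p : ℕ) : ZMod 2 :=
    if p < levinLen d then levinBlock d p else go (d+1) (p - levinLen d)
  termination_by p
  decreasing_by
    
    have h1 : 0 < levinLen d :=
      Nat.mul_pos (Nat.two_pow_pos d) (Nat.two_pow_pos (2^d))
    omega

/-- Levin's number as a real number in `[0,1)`. -/
noncomputable def levinReal : ℝ := ∑' p : ℕ, ((levinWord p).val : ℝ) / 2^(p+1)

/-- Distance from a real number to the nearest integer. -/
noncomputable def torusDist (y : ℝ) : ℝ := |y - round y|

/-- The pair-correlation counting function
`F_N(s) = (1/N) · #{(i,j) : 1 ≤ i ≠ j ≤ N, ‖x_i − x_j‖ < s/N}`. -/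
noncomputable def pairF (x : ℕ → ℝ) (N : ℕ) (s : ℝ) : ℝ :=
  (Nat.card {p : ℕ × ℕ // 1 ≤ p.1 ∧ p.1 ≤ N ∧ 1 ≤ p.2 ∧ p.2 ≤ N ∧ p.1 ≠ p.2 ∧
      torusDist (x p.1 - x p.2) < s / N} : ℝ) / N

/-- Poissonian pair correlations: `F_N(s) → 2s` for every `s ≥ 0`. -/
def PoissonianPC (x : ℕ → ℝ) : Prop :=
  ∀ s : ℝ, 0 ≤ s → Filter.Tendsto (fun N => pairF x N s) Filter.atTop (nhds (2*s))

open Finset in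
lemma choose_two_pow_cast_eq_zero {d x : ℕ} (hx : x ≠ 0) (hx' : x ≠ 2^d) :
    (((2^d).choose x : ℕ) : ZMod 2) = 0 := by
  rw [ZMod.natCast_eq_zero_iff]
  exact Nat.Prime.dvd_choose_pow Nat.prime_two hx hx'

open Finset in
lemma choose_two_pow_add_left {d a b : ℕ} (ha : a < 2^d) :
    (((2^d + b).choose a : ℕ) : ZMod 2) = ((b.choose a : ℕ) : ZMod 2) := by
  rw [Nat.add_choose_eq]
  push_cast
  rw [Finset.sum_eq_single (0, a)]
  · simp
  · rintro ⟨x, y⟩ hxy hne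
    rw [Finset.HasAntidiagonal.mem_antidiagonal] at hxy
    have hx0 : x ≠ 0 := by rintro rfl; simp at hxy; exact hne (by simp [hxy])
    have hx2 : x ≠ 2^d := by omega
    rw [choose_two_pow_cast_eq_zero hx0 hx2, zero_mul]
  · intro habs; exact absurd (by simp) habs

open Finset in
lemma choose_two_pow_add_both {d a b : ℕ} (ha : a < 2^d) (hb : b < 2^d) :
    (((2^d + b).choose (2^d + a) : ℕ) : ZMod 2) = ((b.choose a : ℕ) : ZMod 2) := by
  rw [Nat.add_choose_eq]
  push_cast
  rw [Finset.sum_eq_single (2^d, a)]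
  · simp
  · rintro ⟨x, y⟩ hxy hne
    rw [Finset.HasAntidiagonal.mem_antidiagonal] at hxy
    rcases eq_or_ne x 0 with rfl | hx0
    · have : b < y := by omega
      rw [Nat.choose_eq_zero_of_lt this]
      push_cast; rw [mul_zero]
    · rcases Nat.lt_or_ge x (2^d) with hlt | hge
      · rw [choose_two_pow_cast_eq_zero hx0 (by omega), zero_mul]
      · have hx2 : x ≠ 2^d := by rintro rfl; simp at hxy; exact hne (by simp [hxy])
        rw [Nat.choose_eq_zero_of_lt (by omega), Nat.cast_zero, zero_mul]
  · intro habs; exact absurd (by simp) habs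
lemma pascalM_succ_apply (d : ℕ) (h : 2^d + 2^d = 2^(d+1)) (x y : Fin (2^d) ⊕ Fin (2^d)) :
    pascalM (d+1) (finCongr h (finSumFinEquiv x)) (finCongr h (finSumFinEquiv y)) =
      Matrix.fromBlocks (pascalM d) (pascalM d) 0 (pascalM d) x y := by
  show (Matrix.reindex (finSumFinEquiv.trans (finCongr _)) (finSumFinEquiv.trans (finCongr _))
      (Matrix.fromBlocks (pascalM d) (pascalM d) 0 (pascalM d))) _ _ = _
  rw [Matrix.reindex_apply]
  simp [Matrix.submatrix_apply]

lemma pascalM_apply : ∀ (d : ℕ) (i j : Fin (2^d)), pascalM d i j = ((j : ℕ).choose (i : ℕ) : ZMod 2)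
  | 0, i, j => by
    fin_cases i; fin_cases j; simp [pascalM]
  | (d+1), i, j => by
    have h : 2^d + 2^d = 2^(d+1) := by rw [pow_succ]; ring
    obtain ⟨x, rfl⟩ := (finSumFinEquiv.trans (finCongr h)).surjective i
    obtain ⟨y, rfl⟩ := (finSumFinEquiv.trans (finCongr h)).surjective j
    have hx := pascalM_succ_apply d h x y
    simp only [Equiv.trans_apply] at *
    rw [hx]
    rcases x with a | a <;> rcases y with b | b <;>
      simp [Matrix.fromBlocks, pascalM_apply d, finCongr_apply]
    · rw [add_comm ((b : ℕ)) (2^d)]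
      exact (choose_two_pow_add_left a.isLt).symm
    · rw [Nat.choose_eq_zero_of_lt (show (b:ℕ) < (a:ℕ) + 2^d by have := b.isLt; omega)]
      simp
    · rw [add_comm ((b : ℕ)) (2^d), add_comm ((a : ℕ)) (2^d)]
      exact (choose_two_pow_add_both a.isLt b.isLt).symm
lemma pascalM_mul_self : ∀ d, pascalM d * pascalM d = 1
  | 0 => by
    ext i j
    fin_cases i; fin_cases j
    rw [Matrix.mul_apply]
    simp [pascalM, Matrix.one_apply]
  | (d+1) => by
    have IH := pascalM_mul_self d
    show (Matrix.reindex (finSumFinEquiv.trans (finCongr _)) (finSumFinEquiv.trans (finCongr _))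
        (Matrix.fromBlocks (pascalM d) (pascalM d) 0 (pascalM d))) *
      (Matrix.reindex (finSumFinEquiv.trans (finCongr _)) (finSumFinEquiv.trans (finCongr _))
        (Matrix.fromBlocks (pascalM d) (pascalM d) 0 (pascalM d))) = 1
    rw [Matrix.reindex_apply, Matrix.submatrix_mul_equiv,
      Matrix.fromBlocks_multiply]
    have hzero : pascalM d * pascalM d + pascalM d * pascalM d = 0 := by
      rw [IH]
      ext i j
      simp only [Matrix.add_apply, Matrix.zero_apply, Matrix.one_apply]
      split <;> decide
    rw [IH] at *
    simp only [Matrix.mul_zero, Matrix.zero_mul, Matrix.mul_one, Matrix.one_mul, add_zero,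
      zero_add] at *
    rw [hzero, Matrix.fromBlocks_one, Matrix.submatrix_one_equiv]

open Finset in
lemma choose_orth (d : ℕ) {a b : ℕ} (ha : a < 2^d) (hb : b < 2^d) :
    ∑ t ∈ Finset.range (2^d), ((t.choose a : ℕ) : ZMod 2) * ((b.choose t : ℕ) : ZMod 2) =
      if a = b then 1 else 0 := by
  have := congrFun (congrFun (pascalM_mul_self d) ⟨a, ha⟩) ⟨b, hb⟩
  rw [Matrix.mul_apply] at this
  simp only [pascalM_apply, Matrix.one_apply] at this
  rw [Fin.sum_univ_eq_sum_range (fun t => ((t.choose a : ℕ) : ZMod 2) * ((b.choose t : ℕ) : ZMod 2))] at this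
  rw [this]
  simp [Fin.ext_iff]
lemma rot_iterate {e : ℕ} (n : ℕ) (v : Fin e → ZMod 2) (i : Fin e) :
    (rot^[n] v) i = v ⟨(i.val + n*(e-1)) % e, Nat.mod_lt _ i.pos⟩ := by
  induction n generalizing v i with
  | zero =>
    simp only [Function.iterate_zero, id_eq]
    congr 1
    exact Fin.ext (by simp [Nat.mod_eq_of_lt i.isLt])
  | succ n IH =>
    rw [Function.iterate_succ_apply, IH]
    show v _ = v _
    congr 1
    apply Fin.ext
    show ((i.val + n*(e-1)) % e + (e-1)) % e = (i.val + (n+1)*(e-1)) % e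
    rw [Nat.mod_add_mod]
    congr 1
    ring

lemma shift_index {e i n : ℕ} (hi : i < e) (hn : n < e) :
    (i + n*(e-1)) % e = if n ≤ i then i - n else i + e - n := by
  have h1 : n * e = n * (e-1) + n := by
    nth_rewrite 1 [show e = (e-1)+1 by omega]; ring
  split
  · have h3 : i + n*(e-1) = (i-n) + n*e := by omega
    rw [h3, Nat.add_mul_mod_self_right, Nat.mod_eq_of_lt (by omega)]
  · have h2 : n * e = (n-1) * e + e := by
      nth_rewrite 1 [show n = (n-1)+1 by omega]; ring
    have h3 : i + n*(e-1) = (i + e - n) + (n-1)*e := by omega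
    rw [h3, Nat.add_mul_mod_self_right, Nat.mod_eq_of_lt (by omega)]

section SuitableLemmas
variable {e : ℕ} {ν : ℕ → ℕ}

lemma suitable_bound (h : Suitable e ν) : ∀ k, k ≤ e - 1 → ν (e - 1 - k) ≤ k := by
  intro k
  induction k with
  | zero => intro _; simpa using Nat.le_of_eq h.1
  | succ k IH =>
    intro hk
    have h2 := (h.2 (e-1-(k+1)) (by omega)).2
    have : e - 1 - (k+1) + 1 = e - 1 - k := by omega
    rw [this] at h2
    exact le_trans h2 (by have := IH (by omega); omega)

lemma suitable_bound' (h : Suitable e ν) {j : ℕ} (hj : j < e) : ν j + j ≤ e - 1 := by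
  have := suitable_bound h (e - 1 - j) (by omega)
  have hj' : e - 1 - (e - 1 - j) = j := by omega
  rw [hj'] at this
  omega

lemma suitable_strict (h : Suitable e ν) (he : 2 ≤ e) (h0 : ν (e-2) = 0) :
    ∀ k, k ≤ e - 2 → ν (e - 2 - k) ≤ k := by
  intro k
  induction k with
  | zero => intro _; simpa using Nat.le_of_eq h0
  | succ k IH =>
    intro hk
    have h2 := (h.2 (e-2-(k+1)) (by omega)).2
    have : e - 2 - (k+1) + 1 = e - 2 - k := by omega
    rw [this] at h2
    exact le_trans h2 (by have := IH (by omega); omega)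

lemma suitable_mono (h : Suitable e ν) : ∀ m a, a + m ≤ e - 1 → ν (a + m) ≤ ν a := by
  intro m
  induction m with
  | zero => intro a _; simp
  | succ m IH =>
    intro a ha
    have h2 := (h.2 (a+m) (by omega)).1
    have h3 := IH a (by omega)
    have : a + (m+1) = (a+m)+1 := by omega
    rw [this]
    omega

end SuitableLemmas

lemma pascalMnu_apply {d : ℕ} {ν : ℕ → ℕ} (h : Suitable (2^d) ν) (i j : Fin (2^d)) :
    pascalMnu d ν i j =
      if ν j.val ≤ i.val then (((j:ℕ).choose (i.val - ν j.val) : ℕ) : ZMod 2) else 0 := by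
  have he : 0 < 2^d := Nat.two_pow_pos d
  have hb := suitable_bound' h j.isLt
  have hn : ν j.val < 2^d := by omega
  rw [pascalMnu, rot_iterate]
  show pascalM d ⟨_, _⟩ j = _
  rw [pascalM_apply]
  simp only [Fin.val_mk]
  rw [shift_index i.isLt hn]
  split
  · rfl
  · rw [Nat.choose_eq_zero_of_lt (by omega)]
    simp
open Finset in
lemma pascalM_mul_pascalMnu {d : ℕ} {ν : ℕ → ℕ} (h : Suitable (2^d) ν) :
    pascalM d * pascalMnu d ν =
      Matrix.of (fun i j : Fin (2^d) =>
        if (j:ℕ) ≤ (i:ℕ) then (((ν j.val).choose (i.val - j.val) : ℕ) : ZMod 2) else 0) := by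
  apply Matrix.ext
  intro i j
  rw [Matrix.mul_apply, Matrix.of_apply]
  have he : 0 < 2^d := Nat.two_pow_pos d
  set n := ν j.val with hndef
  have hbj : n + (j:ℕ) ≤ 2^d - 1 := by rw [hndef]; exact suitable_bound' h j.isLt
  have step1 : ∀ k : Fin (2^d), pascalM d i k * pascalMnu d ν k j
      = (((k:ℕ).choose i.val : ℕ) : ZMod 2) *
        (if n ≤ (k:ℕ) then (((j:ℕ).choose ((k:ℕ) - n) : ℕ) : ZMod 2) else 0) := by
    intro k; rw [pascalM_apply, pascalMnu_apply h]
  rw [Finset.sum_congr rfl (fun k _ => step1 k)]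
  rw [Fin.sum_univ_eq_sum_range (fun t => ((t.choose i.val : ℕ) : ZMod 2) *
        (if n ≤ t then (((j:ℕ).choose (t - n) : ℕ) : ZMod 2) else 0))]
  have hne : n ≤ 2^d := by omega
  rw [Finset.range_eq_Ico, ← Finset.sum_Ico_consecutive _ (Nat.zero_le n) hne]
  have first0 : (∑ t ∈ Finset.Ico 0 n, ((t.choose i.val : ℕ) : ZMod 2) *
      (if n ≤ t then (((j:ℕ).choose (t - n) : ℕ) : ZMod 2) else 0)) = 0 := by
    apply Finset.sum_eq_zero
    intro t ht
    rw [Finset.mem_Ico] at ht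
    rw [if_neg (by omega), mul_zero]
  rw [first0, zero_add, Finset.sum_Ico_eq_sum_range]
  have step2 : ∀ t ∈ Finset.range (2^d - n),
      ((((n+t).choose i.val : ℕ) : ZMod 2) *
        (if n ≤ n+t then (((j:ℕ).choose ((n+t) - n) : ℕ) : ZMod 2) else 0))
      = (((n+t).choose i.val : ℕ) : ZMod 2) * (((j:ℕ).choose t : ℕ) : ZMod 2) := by
    intro t _
    rw [if_pos (by omega), Nat.add_sub_cancel_left]
  rw [Finset.sum_congr rfl step2]
  have step3 : (∑ t ∈ Finset.range (2^d - n), (((n+t).choose i.val : ℕ) : ZMod 2) * (((j:ℕ).choose t : ℕ) : ZMod 2))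
      = ∑ t ∈ Finset.range (2^d), (((n+t).choose i.val : ℕ) : ZMod 2) * (((j:ℕ).choose t : ℕ) : ZMod 2) := by
    apply Finset.sum_subset (Finset.range_subset_range.2 (by omega))
    intro t _ ht
    rw [Finset.mem_range, not_lt] at ht
    rw [Nat.choose_eq_zero_of_lt (show (j:ℕ) < t by omega), Nat.cast_zero, mul_zero]
  rw [step3]
  have vdm : ∀ t, (((n+t).choose i.val : ℕ) : ZMod 2)
      = ∑ p ∈ Finset.HasAntidiagonal.antidiagonal i.val, ((t.choose p.1 : ℕ) : ZMod 2) * ((n.choose p.2 : ℕ) : ZMod 2) := by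
    intro t
    rw [add_comm n t, Nat.add_choose_eq]
    push_cast
    rfl
  calc ∑ t ∈ Finset.range (2^d), (((n+t).choose i.val : ℕ) : ZMod 2) * (((j:ℕ).choose t : ℕ) : ZMod 2)
      = ∑ t ∈ Finset.range (2^d), ∑ p ∈ Finset.HasAntidiagonal.antidiagonal i.val,
          ((n.choose p.2 : ℕ) : ZMod 2) * (((t.choose p.1 : ℕ) : ZMod 2) * (((j:ℕ).choose t : ℕ) : ZMod 2)) := by
        refine Finset.sum_congr rfl fun t _ => ?_
        rw [vdm t, Finset.sum_mul]
        exact Finset.sum_congr rfl fun p _ => by ring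
    _ = ∑ p ∈ Finset.HasAntidiagonal.antidiagonal i.val, ∑ t ∈ Finset.range (2^d),
          ((n.choose p.2 : ℕ) : ZMod 2) * (((t.choose p.1 : ℕ) : ZMod 2) * (((j:ℕ).choose t : ℕ) : ZMod 2)) :=
        Finset.sum_comm
    _ = ∑ p ∈ Finset.HasAntidiagonal.antidiagonal i.val,
          ((n.choose p.2 : ℕ) : ZMod 2) * (if p.1 = (j:ℕ) then 1 else 0) := by
        refine Finset.sum_congr rfl fun p hp => ?_
        rw [← Finset.mul_sum]
        congr 1
        have hp1 : p.1 < 2^d := by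
          rw [Finset.HasAntidiagonal.mem_antidiagonal] at hp
          have := i.isLt; omega
        exact choose_orth d hp1 j.isLt
    _ = if (j:ℕ) ≤ (i:ℕ) then (((ν j.val).choose (i.val - j.val) : ℕ) : ZMod 2) else 0 := by
        rcases le_or_gt (j:ℕ) (i:ℕ) with hle | hlt
        · rw [if_pos hle]
          rw [Finset.sum_eq_single ((j:ℕ), i.val - j.val)]
          · rw [if_pos rfl, mul_one]
          · rintro ⟨x, y⟩ hxy hne
            rw [Finset.HasAntidiagonal.mem_antidiagonal] at hxy
            have : x ≠ (j:ℕ) := by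
              rintro rfl
              exact hne (by simp; omega)
            rw [if_neg this, mul_zero]
          · intro habs
            exact absurd (by rw [Finset.HasAntidiagonal.mem_antidiagonal]; simp; omega) habs
        · rw [if_neg (by omega)]
          apply Finset.sum_eq_zero
          rintro ⟨x, y⟩ hxy
          rw [Finset.HasAntidiagonal.mem_antidiagonal] at hxy
          rw [if_neg (by simp; omega), mul_zero]
lemma pascalMnu_isUnit {d : ℕ} {ν : ℕ → ℕ} (h : Suitable (2^d) ν) :
    IsUnit (pascalMnu d ν) := by
  rw [Matrix.isUnit_iff_isUnit_det]
  have hdetU : (pascalM d * pascalMnu d ν).det = 1 := by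
    rw [pascalM_mul_pascalMnu h]
    rw [Matrix.det_of_lowerTriangular _ (by
      intro i j hij
      have : (i : ℕ) < (j : ℕ) := hij
      simp only [Matrix.of_apply]
      rw [if_neg (by omega)])]
    apply Finset.prod_eq_one
    intro i _
    simp
  rw [Matrix.det_mul] at hdetU
  exact IsUnit.of_mul_eq_one _ (by rw [mul_comm]; exact hdetU)

lemma pascalMnu_row_zero {d : ℕ} {ν : ℕ → ℕ} (hd : 1 ≤ d) (h : Suitable (2^d) ν)
    (h1 : ν (2^d - 2) = 1) (v : Fin (2^d) → ZMod 2)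
    (i₀ l : Fin (2^d)) (hi₀ : (i₀ : ℕ) = 0) (hl : (l : ℕ) = 2^d - 1) :
    (pascalMnu d ν).mulVec v i₀ = v l := by
  have he : 2 ≤ 2^d := by
    calc 2 = 2^1 := (pow_one 2).symm
    _ ≤ 2^d := Nat.pow_le_pow_right (by norm_num) hd
  simp only [Matrix.mulVec, dotProduct]
  rw [Finset.sum_eq_single l]
  · rw [pascalMnu_apply h]
    rw [hl, h.1, if_pos (by omega), hi₀]
    simp
  · intro j _ hj
    have hjv : (j : ℕ) ≠ 2^d - 1 := fun hc => hj (Fin.ext (by rw [hc, hl]))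
    have hjle : (j : ℕ) ≤ 2^d - 2 := by have := j.isLt; omega
    have hmono := suitable_mono h (2^d - 2 - (j : ℕ)) (j : ℕ) (by omega)
    rw [show (j:ℕ) + (2^d - 2 - (j:ℕ)) = 2^d - 2 by omega, h1] at hmono
    rw [pascalMnu_apply h, if_neg (by omega), zero_mul]
  · intro habs; exact absurd (Finset.mem_univ l) habs

lemma pascalMnu_row_last {d : ℕ} {ν : ℕ → ℕ} (hd : 1 ≤ d) (h : Suitable (2^d) ν)
    (h0 : ν (2^d - 2) = 0) (v : Fin (2^d) → ZMod 2)
    (l : Fin (2^d)) (hl : (l : ℕ) = 2^d - 1) :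
    (pascalMnu d ν).mulVec v l = v l := by
  have he : 2 ≤ 2^d := by
    calc 2 = 2^1 := (pow_one 2).symm
    _ ≤ 2^d := Nat.pow_le_pow_right (by norm_num) hd
  simp only [Matrix.mulVec, dotProduct]
  rw [Finset.sum_eq_single l]
  · rw [pascalMnu_apply h]
    rw [hl, h.1, if_pos (by omega)]
    simp
  · intro j _ hj
    have hjv : (j : ℕ) ≠ 2^d - 1 := fun hc => hj (Fin.ext (by rw [hc, hl]))
    have hjle : (j : ℕ) ≤ 2^d - 2 := by have := j.isLt; omega
    have hstrict := suitable_strict h he h0 (2^d - 2 - (j:ℕ)) (by omega)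
    rw [show 2^d - 2 - (2^d - 2 - (j:ℕ)) = (j:ℕ) by omega] at hstrict
    rw [pascalMnu_apply h, if_pos (by omega), hl]
    rw [Nat.choose_eq_zero_of_lt (by omega), Nat.cast_zero, zero_mul]
  · intro habs; exact absurd (Finset.mem_univ l) habs

/-- if `n_{e-1} = 1` then `M_d^ν` maps the even vectors
bijectively onto the vectors whose first coordinate is `0`; if `n_{e-1} = 0`
then `M_d^ν` maps the even vectors bijectively onto themselves. -/
theorem pascalMnu_even_bijOn (d : ℕ) (hd : 1 ≤ d) (ν : ℕ → ℕ)
    (h : Suitable (2^d) ν) :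
    (ν (2^d - 2) = 1 →
      Set.BijOn ((pascalMnu d ν).mulVec)
        {v : Fin (2^d) → ZMod 2 | v ⟨2^d - 1, by have := Nat.two_pow_pos d; omega⟩ = 0}
        {v : Fin (2^d) → ZMod 2 | v ⟨0, Nat.two_pow_pos d⟩ = 0}) ∧
    (ν (2^d - 2) = 0 →
      Set.BijOn ((pascalMnu d ν).mulVec)
        {v : Fin (2^d) → ZMod 2 | v ⟨2^d - 1, by have := Nat.two_pow_pos d; omega⟩ = 0}
        {v : Fin (2^d) → ZMod 2 | v ⟨2^d - 1, by have := Nat.two_pow_pos d; omega⟩ = 0}) := by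
  have he : 2 ≤ 2^d := by
    calc 2 = 2^1 := (pow_one 2).symm
    _ ≤ 2^d := Nat.pow_le_pow_right (by norm_num) hd
  have hA := pascalMnu_isUnit h
  have hdet : IsUnit (pascalMnu d ν).det := (Matrix.isUnit_iff_isUnit_det _).1 hA
  have hinj : Function.Injective (pascalMnu d ν).mulVec :=
    Matrix.mulVec_injective_iff_isUnit.2 hA
  have hright : pascalMnu d ν * (pascalMnu d ν)⁻¹ = 1 := Matrix.mul_nonsing_inv _ hdet
  have happ : ∀ w, (pascalMnu d ν).mulVec ((pascalMnu d ν)⁻¹.mulVec w) = w := fun w => by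
    rw [Matrix.mulVec_mulVec, hright, Matrix.one_mulVec]
  have h0lt : (0:ℕ) < 2^d := Nat.two_pow_pos d
  have hllt : 2^d - 1 < 2^d := by omega
  constructor
  · intro h1
    refine ⟨?_, hinj.injOn, ?_⟩
    · intro v hv
      exact (pascalMnu_row_zero hd h h1 v ⟨0, h0lt⟩ ⟨2^d-1, hllt⟩ rfl rfl).trans hv
    · intro w hw
      refine ⟨(pascalMnu d ν)⁻¹.mulVec w, ?_, happ w⟩
      have hr := pascalMnu_row_zero hd h h1 ((pascalMnu d ν)⁻¹.mulVec w)
        ⟨0, h0lt⟩ ⟨2^d-1, hllt⟩ rfl rfl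
      rw [happ w] at hr
      show ((pascalMnu d ν)⁻¹.mulVec w) ⟨2^d-1, _⟩ = 0
      rw [← hr]
      exact hw
  · intro h0
    refine ⟨?_, hinj.injOn, ?_⟩
    · intro v hv
      exact (pascalMnu_row_last hd h h0 v ⟨2^d-1, hllt⟩ rfl).trans hv
    · intro w hw
      refine ⟨(pascalMnu d ν)⁻¹.mulVec w, ?_, happ w⟩
      have hr := pascalMnu_row_last hd h h0 ((pascalMnu d ν)⁻¹.mulVec w) ⟨2^d-1, hllt⟩ rfl
      rw [happ w] at hr
      show ((pascalMnu d ν)⁻¹.mulVec w) ⟨2^d-1, _⟩ = 0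
      rw [← hr]
      exact hw
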